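/- Let K₀ be a complex Hilbert space, let q and c be real numbers with 0 < q < 1 and c ≥ 0, and let Y₀ be a bounded self-adjoint operator on K₀. Then there exist bounded operators X and Y on ℓ²(ℕ, K₀), with Y self-adjoint, such that for all n ∈ ℕ and ζ ∈ K₀: X(eₙ(ζ)) = (1 − q^{2(n+1)})^{1/2} eₙ₊₁((q^{2n}Y₀² + c·1)^{1/2} ζ), Y(eₙ(ζ)) = q^{2n} eₙ(Y₀ζ), X*(e₀(ζ)) = 0, and X*(eₙ(ζ)) = (1 − q^{2n})^{1/2} eₙ₋₁((q^{2n−2}Y₀² + c·1)^{1/2} ζ) for n ≥ 1; and these operators satisfy the relations YX = q²XY, YX* = q^{−2}X*Y, and X*X − q²XX* = (1 − q²)(Y² + c·1). -/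

import Mathlib

open ContinuousLinearMap
open scoped ENNReal
noncomputable section

namespace YcAux

variable {K₀ : Type*} [NormedAddCommGroup K₀] [InnerProductSpace ℂ K₀] [CompleteSpace K₀]

local notation "ℋ" => lp (fun _ : ℕ => K₀) 2

lemma rpow_toReal_two (x : ℝ) : x ^ ((2 : ℝ≥0∞).toReal) = x ^ 2 := by
  rw [ENNReal.toReal_ofNat, show (2:ℝ) = ((2:ℕ):ℝ) by norm_num, Real.rpow_natCast]

lemma hasSum_norm_sq (f : ℋ) : HasSum (fun n => ‖f n‖ ^ 2) (‖f‖ ^ 2) := by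
  have := lp.hasSum_norm (p := 2) (by norm_num) f
  simpa [rpow_toReal_two] using this

lemma tsum_norm_sq (f : ℋ) : ∑' n, ‖f n‖ ^ 2 = ‖f‖ ^ 2 := (hasSum_norm_sq f).tsum_eq

lemma memℓp_two {g : ∀ _ : ℕ, K₀} (h : Summable fun n => ‖g n‖ ^ 2) :
    Memℓp g 2 := by
  apply memℓp_gen
  simpa [rpow_toReal_two] using h

lemma lp_norm_le (g : ℋ) {C : ℝ} (hC : 0 ≤ C) (h : ∑' n, ‖g n‖ ^ 2 ≤ C ^ 2) :
    ‖g‖ ≤ C := by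
  apply lp.norm_le_of_tsum_le (by norm_num) hC
  simpa [rpow_toReal_two] using h

lemma single_self (n : ℕ) (ζ : K₀) :
    (lp.single 2 n ζ : ∀ _ : ℕ, K₀) n = ζ :=
  lp.single_apply_self (E := fun _ : ℕ => K₀) 2 n ζ

lemma single_ne {n m : ℕ} (h : m ≠ n) (ζ : K₀) :
    (lp.single 2 n ζ : ∀ _ : ℕ, K₀) m = 0 :=
  lp.single_apply_ne (E := fun _ : ℕ => K₀) 2 n ζ h

lemma single_add' (n : ℕ) (u v : K₀) :
    lp.single (E := fun _ : ℕ => K₀) 2 n (u + v)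
      = lp.single (E := fun _ : ℕ => K₀) 2 n u + lp.single (E := fun _ : ℕ => K₀) 2 n v := by
  apply lp.ext; funext m
  rw [lp.coeFn_add, Pi.add_apply]
  rcases eq_or_ne m n with rfl | h
  · rw [single_self, single_self, single_self]
  · rw [single_ne h, single_ne h, single_ne h, add_zero]

section diag

variable (B : ℕ → K₀ →L[ℂ] K₀) {C : ℝ} (hC : 0 ≤ C) (hB : ∀ n, ‖B n‖ ≤ C)

include hC hB in
lemma diag_memℓp (f : ℋ) : Memℓp (fun n => B n (f n)) 2 := by
  apply memℓp_two
  apply Summable.of_nonneg_of_le (fun n => by positivity)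
    (fun n => ?_) (((hasSum_norm_sq f).summable).mul_left (C ^ 2))
  calc ‖B n (f n)‖ ^ 2 ≤ (C * ‖f n‖) ^ 2 := by
        apply pow_le_pow_left₀ (norm_nonneg _)
        exact ((B n).le_opNorm _).trans (by gcongr; exact hB n)
    _ = C ^ 2 * ‖f n‖ ^ 2 := by ring

/-- diagonal operator -/
def diagL : ℋ →L[ℂ] ℋ :=
  LinearMap.mkContinuous
    { toFun := fun f => ⟨fun n => B n (f n), diag_memℓp B hC hB f⟩
      map_add' := fun f g => by
        apply lp.ext; funext n
        simp [lp.coeFn_add, Pi.add_apply]; rfl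
      map_smul' := fun a f => by
        apply lp.ext; funext n
        simp [lp.coeFn_smul, Pi.smul_apply] }
    C
    (fun f => by
      apply lp_norm_le _ (by positivity)
      have h1 : ∀ n : ℕ, ‖B n ((f : ∀ _ : ℕ, K₀) n)‖ ^ 2 ≤ C ^ 2 * ‖f n‖ ^ 2 := fun n => by
        calc ‖B n (f n)‖ ^ 2 ≤ (C * ‖f n‖) ^ 2 := by
              apply pow_le_pow_left₀ (norm_nonneg _)
              exact ((B n).le_opNorm _).trans (by gcongr; exact hB n)
          _ = C ^ 2 * ‖f n‖ ^ 2 := by ring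
      calc (∑' n, ‖B n (f n)‖ ^ 2) ≤ ∑' n, C ^ 2 * ‖f n‖ ^ 2 := by
            apply Summable.tsum_le_tsum h1
              (Summable.of_nonneg_of_le (fun n => by positivity) h1
                ((hasSum_norm_sq f).summable.mul_left (C ^ 2)))
              ((hasSum_norm_sq f).summable.mul_left (C ^ 2))
        _ = C ^ 2 * ‖f‖ ^ 2 := by rw [tsum_mul_left, tsum_norm_sq]
        _ = (C * ‖f‖) ^ 2 := by ring)

lemma diagL_apply (f : ℋ) (n : ℕ) : (diagL B hC hB f) n = B n (f n) := rfl

lemma diagL_single (n : ℕ) (ζ : K₀) :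
    diagL B hC hB (lp.single 2 n ζ) = lp.single 2 n (B n ζ) := by
  apply lp.ext; funext m
  rcases eq_or_ne m n with rfl | h
  · rw [diagL_apply, single_self, single_self]
  · rw [diagL_apply, single_ne h, single_ne h, map_zero]

end diag

section shift

/-- the underlying function of the right shift -/
def shiftRfun (f : ∀ _ : ℕ, K₀) : ∀ _ : ℕ, K₀ := fun m => match m with
  | 0 => 0
  | n + 1 => f n

@[simp] lemma shiftRfun_zero (f : ∀ _ : ℕ, K₀) : shiftRfun f 0 = 0 := rfl
@[simp] lemma shiftRfun_succ (f : ∀ _ : ℕ, K₀) (n : ℕ) : shiftRfun f (n + 1) = f n := rfl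

lemma shiftR_memℓp (f : ℋ) : Memℓp (shiftRfun (f : ∀ _ : ℕ, K₀)) 2 := by
  apply memℓp_two
  rw [← summable_nat_add_iff 1]
  exact (hasSum_norm_sq f).summable.congr fun n => by simp

lemma shiftR_tsum (f : ℋ) :
    ∑' m, ‖shiftRfun (f : ∀ _ : ℕ, K₀) m‖ ^ 2 = ‖f‖ ^ 2 := by
  have hs : Summable fun m => ‖shiftRfun (f : ∀ _ : ℕ, K₀) m‖ ^ 2 := by
    rw [← summable_nat_add_iff 1]
    exact (hasSum_norm_sq f).summable.congr fun n => by simp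
  rw [Summable.tsum_eq_zero_add hs]
  simp [tsum_norm_sq f]

/-- right shift operator -/
def shiftR : ℋ →L[ℂ] ℋ :=
  LinearMap.mkContinuous
    { toFun := fun f => ⟨shiftRfun (f : ∀ _ : ℕ, K₀), shiftR_memℓp f⟩
      map_add' := fun f g => by
        apply lp.ext; funext m
        match m with
        | 0 => simp [lp.coeFn_add, Pi.add_apply, shiftRfun]; exact (add_zero (0:K₀)).symm
        | n + 1 => simp [lp.coeFn_add, Pi.add_apply, shiftRfun]; rfl
      map_smul' := fun a f => by
        apply lp.ext; funext m
        match m with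
        | 0 => simp [lp.coeFn_smul, Pi.smul_apply, shiftRfun]
        | n + 1 => simp [lp.coeFn_smul, Pi.smul_apply, shiftRfun] }
    1
    (fun f => by
      apply lp_norm_le _ (by positivity)
      calc (∑' m, ‖shiftRfun (f : ∀ _ : ℕ, K₀) m‖ ^ 2) = ‖f‖ ^ 2 := shiftR_tsum f
        _ ≤ (1 * ‖f‖) ^ 2 := by rw [one_mul])

@[simp] lemma shiftR_apply_zero (f : ℋ) : (shiftR f : ∀ _ : ℕ, K₀) 0 = 0 := rfl
@[simp] lemma shiftR_apply_succ (f : ℋ) (n : ℕ) : (shiftR f : ∀ _ : ℕ, K₀) (n + 1) = f n := rfl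

lemma shiftR_single (n : ℕ) (ζ : K₀) :
    shiftR (lp.single 2 n ζ) = lp.single 2 (n + 1) ζ := by
  apply lp.ext; funext m
  match m with
  | 0 => rw [shiftR_apply_zero, single_ne (by omega : (0:ℕ) ≠ n + 1)]
  | m + 1 =>
    rcases eq_or_ne m n with rfl | h
    · rw [shiftR_apply_succ, single_self, single_self]
    · rw [shiftR_apply_succ, single_ne h, single_ne (by omega : m + 1 ≠ n + 1)]

lemma shiftL_memℓp (f : ℋ) : Memℓp (fun n => (f : ∀ _ : ℕ, K₀) (n + 1)) 2 := by
  apply memℓp_two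
  exact (summable_nat_add_iff 1).mpr (hasSum_norm_sq f).summable

lemma shiftL_tsum_le (f : ℋ) :
    ∑' n, ‖(f : ∀ _ : ℕ, K₀) (n + 1)‖ ^ 2 ≤ ‖f‖ ^ 2 := by
  have hs := (hasSum_norm_sq f).summable
  rw [← tsum_norm_sq f, Summable.tsum_eq_zero_add hs]
  have : (0:ℝ) ≤ ‖f 0‖ ^ 2 := by positivity
  linarith

/-- left shift operator -/
def shiftL : ℋ →L[ℂ] ℋ :=
  LinearMap.mkContinuous
    { toFun := fun f => ⟨fun n => (f : ∀ _ : ℕ, K₀) (n + 1), shiftL_memℓp f⟩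
      map_add' := fun f g => by
        apply lp.ext; funext n
        simp [lp.coeFn_add, Pi.add_apply]; rfl
      map_smul' := fun a f => by
        apply lp.ext; funext n
        simp [lp.coeFn_smul, Pi.smul_apply] }
    1
    (fun f => by
      apply lp_norm_le _ (by positivity)
      calc (∑' n, ‖(f : ∀ _ : ℕ, K₀) (n + 1)‖ ^ 2) ≤ ‖f‖ ^ 2 := shiftL_tsum_le f
        _ ≤ (1 * ‖f‖) ^ 2 := by rw [one_mul])

@[simp] lemma shiftL_apply (f : ℋ) (n : ℕ) : (shiftL f : ∀ _ : ℕ, K₀) n = f (n + 1) := rfl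

lemma shiftL_single_zero (ζ : K₀) : shiftL (lp.single 2 0 ζ) = 0 := by
  apply lp.ext; funext n
  rw [shiftL_apply, single_ne (by omega : n + 1 ≠ 0)]
  simp

lemma shiftL_single_succ (n : ℕ) (ζ : K₀) :
    shiftL (lp.single 2 (n + 1) ζ) = lp.single 2 n ζ := by
  apply lp.ext; funext m
  rcases eq_or_ne m n with rfl | h
  · rw [shiftL_apply, single_self, single_self]
  · rw [shiftL_apply, single_ne h, single_ne (by omega : m + 1 ≠ n + 1)]

end shift

section adjoint

local notation "⟪" x ", " y "⟫" => @inner ℂ _ _ x y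

lemma adjoint_diagL (B : ℕ → K₀ →L[ℂ] K₀) {C : ℝ} (hC : 0 ≤ C) (hB : ∀ n, ‖B n‖ ≤ C)
    (hB' : ∀ n, ‖adjoint (B n)‖ ≤ C) :
    adjoint (diagL B hC hB) = diagL (fun n => adjoint (B n)) hC hB' := by
  symm
  rw [eq_adjoint_iff]
  intro f g
  rw [lp.inner_eq_tsum, lp.inner_eq_tsum]
  refine tsum_congr fun n => ?_
  rw [diagL_apply, diagL_apply, adjoint_inner_left]

lemma adjoint_shiftR : adjoint (shiftR (K₀ := K₀)) = shiftL := by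
  symm
  rw [eq_adjoint_iff]
  intro f g
  rw [lp.inner_eq_tsum, lp.inner_eq_tsum]
  rw [Summable.tsum_eq_zero_add (lp.summable_inner (𝕜 := ℂ) f (shiftR g))]
  simp only [shiftL_apply, shiftR_apply_zero, shiftR_apply_succ, inner_zero_right, zero_add]

lemma ext_singles {P Q : ℋ →L[ℂ] ℋ}
    (h : ∀ (n : ℕ) (ζ : K₀), P (lp.single 2 n ζ) = Q (lp.single 2 n ζ)) : P = Q := by
  refine ContinuousLinearMap.ext fun f => ?_
  have h1 := lp.hasSum_single (E := fun _ : ℕ => K₀) (p := 2) (by norm_num) f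
  have hP : HasSum (fun n => P (lp.single 2 n (f n))) (P f) := h1.mapL P
  have hQ : HasSum (fun n => P (lp.single 2 n (f n))) (Q f) := by
    simpa only [← h] using h1.mapL Q
  exact hP.unique hQ

end adjoint

end YcAux

open YcAux in
set_option maxHeartbeats 2000000 in
theorem Yc_representation_exists
    {K₀ : Type*} [NormedAddCommGroup K₀] [InnerProductSpace ℂ K₀] [CompleteSpace K₀]
    (q c : ℝ) (hq0 : 0 < q) (hq1 : q < 1) (hc : 0 ≤ c)
    (Y₀ : K₀ →L[ℂ] K₀) (hY₀ : IsSelfAdjoint Y₀) :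
    ∃ (T : ℕ → (K₀ →L[ℂ] K₀))
      (X Y : lp (fun _ : ℕ => K₀) 2 →L[ℂ] lp (fun _ : ℕ => K₀) 2),
      (∀ n : ℕ, (T n).IsPositive ∧
        T n ∘L T n = ((q : ℂ) ^ (2 * n)) • (Y₀ ∘L Y₀) + (c : ℂ) • (1 : K₀ →L[ℂ] K₀)) ∧
      IsSelfAdjoint Y ∧
      (∀ (n : ℕ) (ζ : K₀),
        X (lp.single 2 n ζ)
          = ((Real.sqrt (1 - q ^ (2 * (n + 1))) : ℝ) : ℂ) • lp.single 2 (n + 1) (T n ζ)) ∧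
      (∀ (n : ℕ) (ζ : K₀),
        Y (lp.single 2 n ζ) = ((q : ℂ) ^ (2 * n)) • lp.single 2 n (Y₀ ζ)) ∧
      (∀ ζ : K₀, adjoint X (lp.single 2 0 ζ) = 0) ∧
      (∀ (n : ℕ) (ζ : K₀),
        adjoint X (lp.single 2 (n + 1) ζ)
          = ((Real.sqrt (1 - q ^ (2 * (n + 1))) : ℝ) : ℂ) • lp.single 2 n (T n ζ)) ∧
      Y ∘L X = ((q : ℂ) ^ 2) • (X ∘L Y) ∧
      Y ∘L adjoint X = ((q : ℂ) ^ 2)⁻¹ • (adjoint X ∘L Y) ∧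
      adjoint X ∘L X - ((q : ℂ) ^ 2) • (X ∘L adjoint X)
        = ((1 : ℂ) - (q : ℂ) ^ 2) • (Y ∘L Y
          + (c : ℂ) • (1 : lp (fun _ : ℕ => K₀) 2 →L[ℂ] lp (fun _ : ℕ => K₀) 2)) := by
  -- the square-root operators
  set T : ℕ → K₀ →L[ℂ] K₀ :=
    fun n => cfc (fun x : ℝ => Real.sqrt (q ^ (2*n) * x ^ 2 + c)) Y₀ with hT
  have hT_sq : ∀ n, T n ∘L T n
      = ((q : ℂ) ^ (2 * n)) • (Y₀ ∘L Y₀) + (c : ℂ) • (1 : K₀ →L[ℂ] K₀) := by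
    intro n
    have hnn : ∀ x : ℝ, 0 ≤ q ^ (2*n) * x ^ 2 + c := fun x => by positivity
    have hcont : Continuous (fun x : ℝ => Real.sqrt (q ^ (2*n) * x ^ 2 + c)) := by
      fun_prop
    have h1 : T n ∘L T n = cfc (fun x : ℝ => q ^ (2*n) * x ^ 2 + c) Y₀ := by
      rw [hT, ← mul_def, ← cfc_mul _ _ Y₀ hcont.continuousOn hcont.continuousOn]
      refine cfc_congr fun x _ => ?_
      exact Real.mul_self_sqrt (hnn x)
    rw [h1]
    have h2 : cfc (fun x : ℝ => q ^ (2*n) * x ^ 2 + c) Y₀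
        = (q ^ (2*n) : ℝ) • (Y₀ ∘L Y₀) + algebraMap ℝ (K₀ →L[ℂ] K₀) c := by
      rw [cfc_add .., cfc_const c Y₀, cfc_const_mul ..]
      congr 1
      rw [cfc_pow_id (R := ℝ) Y₀, sq, mul_def]
    rw [h2]
    rw [Algebra.algebraMap_eq_smul_one, ← Complex.coe_smul, ← Complex.coe_smul]
    norm_num
  have hT_nonneg : ∀ n, (0 : K₀ →L[ℂ] K₀) ≤ T n :=
    fun n => cfc_nonneg fun x _ => Real.sqrt_nonneg _
  have hT_pos : ∀ n, (T n).IsPositive :=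
    fun n => (nonneg_iff_isPositive _).mp (hT_nonneg n)
  have hT_sa : ∀ n, IsSelfAdjoint (T n) := fun n => (hT_pos n).isSelfAdjoint
  have hq2le : ∀ m : ℕ, q ^ m ≤ 1 := fun m => pow_le_one₀ hq0.le hq1.le
  have hT_norm : ∀ n, ‖T n‖ ≤ Real.sqrt (‖Y₀‖ ^ 2 + c) := by
    intro n
    have h1 : ‖T n‖ * ‖T n‖ = ‖T n ∘L T n‖ := by
      rw [← CStarRing.norm_star_mul_self (x := T n), (hT_sa n).star_eq, mul_def]
    have h2 : ‖T n ∘L T n‖ ≤ ‖Y₀‖ ^ 2 + c := by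
      rw [hT_sq n]
      refine (norm_add_le _ _).trans ?_
      have e1 : ‖((q : ℂ) ^ (2 * n)) • (Y₀ ∘L Y₀)‖ ≤ ‖Y₀‖ ^ 2 := by
        rw [norm_smul]
        have : ‖(q : ℂ) ^ (2 * n)‖ ≤ 1 := by
          rw [norm_pow, Complex.norm_real, Real.norm_of_nonneg hq0.le]
          exact hq2le _
        calc ‖(q : ℂ) ^ (2 * n)‖ * ‖Y₀ ∘L Y₀‖ ≤ 1 * ‖Y₀ ∘L Y₀‖ := by
              gcongr
          _ = ‖Y₀ ∘L Y₀‖ := one_mul _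
          _ ≤ ‖Y₀‖ * ‖Y₀‖ := opNorm_comp_le _ _
          _ = ‖Y₀‖ ^ 2 := (sq ‖Y₀‖).symm
      have e2 : ‖(c : ℂ) • (1 : K₀ →L[ℂ] K₀)‖ ≤ c := by
        rw [norm_smul, Complex.norm_real, Real.norm_of_nonneg hc]
        calc c * ‖(1 : K₀ →L[ℂ] K₀)‖ ≤ c * 1 := by
              gcongr
              rw [ContinuousLinearMap.one_def]
              exact ContinuousLinearMap.norm_id_le
          _ = c := mul_one c
      linarith
    have h3 : ‖T n‖ ^ 2 ≤ ‖Y₀‖ ^ 2 + c := by rw [sq, h1]; exact h2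
    calc ‖T n‖ = Real.sqrt (‖T n‖ ^ 2) := (Real.sqrt_sq (norm_nonneg _)).symm
      _ ≤ Real.sqrt (‖Y₀‖ ^ 2 + c) := Real.sqrt_le_sqrt h3
  -- commutation of Y₀ with T n
  have hcomm : ∀ n, Y₀ ∘L T n = T n ∘L Y₀ := by
    intro n
    have h := cfc_commute_cfc (id : ℝ → ℝ)
      (fun x : ℝ => Real.sqrt (q ^ (2*n) * x ^ 2 + c)) Y₀
    rw [cfc_id ℝ Y₀] at h
    rw [← mul_def, ← mul_def]
    exact h.eq
  have hcommApp : ∀ (n : ℕ) (ζ : K₀), T n (Y₀ ζ) = Y₀ (T n ζ) := by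
    intro n ζ
    have h := ContinuousLinearMap.ext_iff.mp (hcomm n) ζ
    rw [comp_apply, comp_apply] at h
    exact h.symm
  have hTTApp : ∀ (n : ℕ) (ζ : K₀),
      T n (T n ζ) = ((q : ℂ) ^ (2 * n)) • Y₀ (Y₀ ζ) + (c : ℂ) • ζ := by
    intro n ζ
    have h := ContinuousLinearMap.ext_iff.mp (hT_sq n) ζ
    rw [comp_apply] at h
    simpa using h
  have hr_nonneg : ∀ n : ℕ, (0:ℝ) ≤ 1 - q ^ (2 * (n + 1)) := fun n => by
    have := hq2le (2 * (n + 1)); linarith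
  -- the diagonal families
  set B : ℕ → K₀ →L[ℂ] K₀ :=
    fun n => ((Real.sqrt (1 - q ^ (2 * (n + 1))) : ℝ) : ℂ) • T n with hB
  set BY : ℕ → K₀ →L[ℂ] K₀ := fun n => ((q : ℂ) ^ (2 * n)) • Y₀ with hBY
  have hCX0 : (0:ℝ) ≤ Real.sqrt (‖Y₀‖ ^ 2 + c) := Real.sqrt_nonneg _
  have hBle : ∀ n, ‖B n‖ ≤ Real.sqrt (‖Y₀‖ ^ 2 + c) := by
    intro n
    rw [hB]
    simp only [norm_smul, Complex.norm_real, Real.norm_of_nonneg (Real.sqrt_nonneg _)]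
    calc Real.sqrt (1 - q ^ (2 * (n + 1))) * ‖T n‖ ≤ 1 * ‖T n‖ := by
          gcongr
          exact Real.sqrt_le_one.mpr (by have := pow_nonneg hq0.le (2*(n+1)); linarith)
      _ = ‖T n‖ := one_mul _
      _ ≤ _ := hT_norm n
  have hB_sa : ∀ n, IsSelfAdjoint (B n) := fun n => by
    rw [hB, IsSelfAdjoint, star_smul, (hT_sa n).star_eq, Complex.star_def,
      Complex.conj_ofReal]
  have hBadj : ∀ n, adjoint (B n) = B n := fun n => (hB_sa n).adjoint_eq
  have hBadjle : ∀ n, ‖adjoint (B n)‖ ≤ Real.sqrt (‖Y₀‖ ^ 2 + c) := fun n => by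
    rw [hBadj n]; exact hBle n
  have hCY0 : (0:ℝ) ≤ ‖Y₀‖ := norm_nonneg _
  have hBYle : ∀ n, ‖BY n‖ ≤ ‖Y₀‖ := by
    intro n
    rw [hBY]
    simp only [norm_smul, norm_pow, Complex.norm_real, Real.norm_of_nonneg hq0.le]
    calc q ^ (2*n) * ‖Y₀‖ ≤ 1 * ‖Y₀‖ := by gcongr; exact hq2le _
      _ = ‖Y₀‖ := one_mul _
  have hBY_sa : ∀ n, IsSelfAdjoint (BY n) := fun n => by
    rw [hBY, IsSelfAdjoint, star_smul, hY₀.star_eq, star_pow, Complex.star_def,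
      Complex.conj_ofReal]
  have hBYadj : ∀ n, adjoint (BY n) = BY n := fun n => (hBY_sa n).adjoint_eq
  have hBYadjle : ∀ n, ‖adjoint (BY n)‖ ≤ ‖Y₀‖ := fun n => by
    rw [hBYadj n]; exact hBYle n
  -- the operators
  set D := diagL B hCX0 hBle with hD
  set Yop := diagL BY hCY0 hBYle with hYop
  set X := shiftR ∘L D with hX
  have hDadj : adjoint D = D := by
    rw [hD, adjoint_diagL B hCX0 hBle hBadjle]
    apply ext_singles
    intro n ζ
    rw [diagL_single, diagL_single, hBadj n]
  have hYadj : adjoint Yop = Yop := by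
    rw [hYop, adjoint_diagL BY hCY0 hBYle hBYadjle]
    apply ext_singles
    intro n ζ
    rw [diagL_single, diagL_single, hBYadj n]
  have hY_sa : IsSelfAdjoint Yop := isSelfAdjoint_iff'.mpr hYadj
  have hXadj : adjoint X = D ∘L shiftL := by
    rw [hX, ContinuousLinearMap.adjoint_comp, adjoint_shiftR, hDadj]
  -- action on singles
  have hXs : ∀ (n : ℕ) (ζ : K₀),
      X (lp.single 2 n ζ)
        = ((Real.sqrt (1 - q ^ (2 * (n + 1))) : ℝ) : ℂ) • lp.single 2 (n + 1) (T n ζ) := by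
    intro n ζ
    rw [hX, comp_apply, hD, diagL_single, shiftR_single, hB]
    rw [ContinuousLinearMap.smul_apply, lp.single_smul]
  have hYs : ∀ (n : ℕ) (ζ : K₀),
      Yop (lp.single 2 n ζ) = ((q : ℂ) ^ (2 * n)) • lp.single 2 n (Y₀ ζ) := by
    intro n ζ
    rw [hYop, diagL_single, hBY]
    rw [ContinuousLinearMap.smul_apply, lp.single_smul]
  have hX'0 : ∀ ζ : K₀, adjoint X (lp.single 2 0 ζ) = 0 := by
    intro ζ
    rw [hXadj, comp_apply, shiftL_single_zero, map_zero]
  have hX's : ∀ (n : ℕ) (ζ : K₀),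
      adjoint X (lp.single 2 (n + 1) ζ)
        = ((Real.sqrt (1 - q ^ (2 * (n + 1))) : ℝ) : ℂ) • lp.single 2 n (T n ζ) := by
    intro n ζ
    rw [hXadj, comp_apply, shiftL_single_succ, hD, diagL_single, hB]
    rw [ContinuousLinearMap.smul_apply, lp.single_smul]
  have hrr : ∀ m : ℕ, ((Real.sqrt (1 - q ^ (2 * (m + 1))) : ℝ) : ℂ)
      * ((Real.sqrt (1 - q ^ (2 * (m + 1))) : ℝ) : ℂ)
      = 1 - (q : ℂ) ^ (2 * (m + 1)) := fun m => by
    rw [← Complex.ofReal_mul, Real.mul_self_sqrt (hr_nonneg m)]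
    push_cast; ring
  refine ⟨T, X, Yop, fun n => ⟨hT_pos n, hT_sq n⟩, hY_sa, hXs, hYs, hX'0, hX's, ?_, ?_, ?_⟩
  · -- Y X = q² X Y
    apply ext_singles
    intro n ζ
    rw [comp_apply, hXs, map_smul, hYs]
    rw [ContinuousLinearMap.smul_apply, comp_apply, hYs, map_smul, hXs, hcommApp]
    rw [smul_smul, smul_smul, smul_smul]
    congr 1
    ring
  · -- Y X* = q⁻² X* Y
    apply ext_singles
    intro n ζ
    match n with
    | 0 =>
      rw [comp_apply, hX'0, map_zero]
      rw [ContinuousLinearMap.smul_apply, comp_apply, hYs, map_smul, hX'0,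
        smul_zero, smul_zero]
    | n + 1 =>
      rw [comp_apply, hX's, map_smul, hYs]
      rw [ContinuousLinearMap.smul_apply, comp_apply, hYs, map_smul, hX's, hcommApp]
      rw [smul_smul, smul_smul, smul_smul]
      congr 1
      have hqC : (q : ℂ) ≠ 0 := Complex.ofReal_ne_zero.mpr hq0.ne'
      field_simp
      ring
  · -- X*X - q² X X* = (1-q²)(Y² + c)
    apply ext_singles
    intro n ζ
    match n with
    | 0 =>
      simp only [ContinuousLinearMap.sub_apply, comp_apply, ContinuousLinearMap.smul_apply,
        ContinuousLinearMap.add_apply, ContinuousLinearMap.one_apply, hXs, map_smul, hX's,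
        hX'0, hYs, map_zero, smul_zero, sub_zero, hTTApp, single_add', lp.single_smul]
      have e0 := hrr 0
      match_scalars
      · linear_combination ((q : ℂ)) ^ (2 * (0 : ℕ)) * e0
      · linear_combination (c : ℂ) * e0
    | n + 1 =>
      simp only [ContinuousLinearMap.sub_apply, comp_apply, ContinuousLinearMap.smul_apply,
        ContinuousLinearMap.add_apply, ContinuousLinearMap.one_apply, hXs, map_smul, hX's,
        hYs, hTTApp, single_add', lp.single_smul]
      have e1 := hrr n
      have e2 := hrr (n + 1)
      match_scalars
      · linear_combination ((q : ℂ)) ^ (2 * (n + 1)) * e2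
          - (q : ℂ) ^ 2 * (q : ℂ) ^ (2 * n) * e1
      · linear_combination (c : ℂ) * e2 - (q : ℂ) ^ 2 * (c : ℂ) * e1
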